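/- For nonnegative integers μ_1 ≥ μ_2 ≥ ⋯ ≥ μ_n = 0 with μ_i ≤ (n−i)m for each i, there is exactly one dominant region R of the m-Shi arrangement of type A_{n−1} whose Shi tableau {e_{ij}} has column sums μ_j = Σ_{i=1}^{n−j} e_{i,n−j} for 1 ≤ j ≤ n−1. In other words, column sums give a bijection from dominant m-Shi regions to partitions μ with μ_i ≤ (n−i)m. -/

import Mathlib

open Finset
open scoped Classical

namespace Shi

/-- Inner product of `x` with the positive root `α_{ij} = e_i - e_{j+1}` (0-indexed
`i ≤ j ≤ n-2`). -/
def inn (x : ℕ → ℝ) (i j : ℕ) : ℝ := x i - x (j + 1)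

def SumZero (n : ℕ) (x : ℕ → ℝ) : Prop := ∑ i ∈ Finset.range n, x i = 0

/-- `x` is a point of the type `A_{n-1}` ambient space lying in the open dominant chamber
and on no hyperplane of the `m`-Shi arrangement, hence an interior point of a dominant
`m`-Shi region. -/
def RegionPoint (n m : ℕ) (x : ℕ → ℝ) : Prop :=
  SumZero n x ∧
  (∀ i j, i ≤ j → j + 2 ≤ n → 0 < inn x i j) ∧
  (∀ i j, i ≤ j → j + 2 ≤ n → ∀ t : ℤ, -(m : ℤ) < t → t ≤ m → inn x i j ≠ (t : ℝ))

/-- `e` is the Shi tableau of the dominant `m`-Shi region containing `x`: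
`e_{ij} = min(⌊⟨x, α_{ij}⟩⌋, m)`, which is constant on the region and equals
`min(k_{ij}, m)` for the Shi coordinates `k` of the `m`-minimal alcove of the region. -/
def TabOf (n m : ℕ) (x : ℕ → ℝ) (e : ℕ → ℕ → ℤ) : Prop :=
  ∀ i j, i ≤ j → j + 2 ≤ n → e i j = min ⌊inn x i j⌋ (m : ℤ)

/-- `e` is the Shi tableau of some dominant region of the `m`-Shi arrangement of type
`A_{n-1}`. -/
def IsShiTab (n m : ℕ) (e : ℕ → ℕ → ℤ) : Prop :=
  ∃ x, RegionPoint n m x ∧ TabOf n m x e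

/-- `p` lies in the closure of the `m`-Shi region containing `x`. -/
def InClosure (n m : ℕ) (x p : ℕ → ℝ) : Prop :=
  SumZero n p ∧ ∀ i j, i ≤ j → j + 2 ≤ n → ∀ t : ℤ, -(m : ℤ) < t → t ≤ m →
    (((t : ℝ) < inn x i j → (t : ℝ) ≤ inn p i j) ∧ (inn x i j < t → inn p i j ≤ t))

/-- The hyperplane `H_{α_{uv}, m}` is a separating wall for the dominant `m`-Shi region
containing `x`: the region lies on the far side of the hyperplane from the fundamental
alcove, and the closure of the region contains a point of the hyperplane lying on no other
hyperplane of the arrangement (so the hyperplane supports a facet). -/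
def SepWall (n m : ℕ) (x : ℕ → ℝ) (u v : ℕ) : Prop :=
  (m : ℝ) < inn x u v ∧
  ∃ p, InClosure n m x p ∧ inn p u v = (m : ℝ) ∧
    ∀ i j, i ≤ j → j + 2 ≤ n → ∀ t : ℤ, -(m : ℤ) < t → t ≤ m →
      ¬(i = u ∧ j = v ∧ t = (m : ℤ)) → inn p i j ≠ (t : ℝ)

/-- The combinatorial criterion for `H_{α_{uv}, m}` to be a separating wall. -/
def SepCrit (m : ℕ) (e : ℕ → ℕ → ℤ) (u v : ℕ) : Prop :=
  e u v = (m : ℤ) ∧ ∀ t, u ≤ t → t < v → e u t + e (t + 1) v = (m : ℤ) - 1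

/-- The region with Shi tableau `e` has `H_{α_{uv}, m}` as a separating wall. -/
def SepWallTab (n m : ℕ) (e : ℕ → ℕ → ℤ) (u v : ℕ) : Prop :=
  ∃ x, RegionPoint n m x ∧ TabOf n m x e ∧ SepWall n m x u v

/-- A tableau function normalized to be `0` outside the staircase index domain. -/
def Normalized (n : ℕ) (e : ℕ → ℕ → ℤ) : Prop :=
  ∀ i j, ¬(i ≤ j ∧ j + 2 ≤ n) → e i j = 0

/-- Hitting lemma: for any finite set `Q` of reals and `r ≤ #(Q ∩ (a,∞))`, there is
`v > a`, `v ∉ Q`, with exactly `r` elements of `Q ∩ (a,∞)` below `v`. -/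
lemma exists_cut (Q : Finset ℝ) (a : ℝ) :
    ∀ r : ℕ, r ≤ (Q.filter (fun q => a < q)).card →
    ∃ v, a < v ∧ v ∉ Q ∧ ((Q.filter (fun q => a < q)).filter (fun q => q < v)).card = r := by
  intro r
  induction r with
  | zero =>
    intro _
    set Q' := Q.filter (fun q => a < q) with hQ'
    rcases Q'.eq_empty_or_nonempty with h | h
    · refine ⟨a + 1, by linarith, ?_, by simp [h]⟩
      intro hv
      have : a + 1 ∈ Q' := Finset.mem_filter.2 ⟨hv, by linarith⟩
      simp [h] at this
    · refine ⟨(a + Q'.min' h) / 2, ?_, ?_, ?_⟩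
      · have := Finset.mem_filter.1 (Q'.min'_mem h)
        linarith [this.2]
      · intro hv
        have h1 : a < (a + Q'.min' h) / 2 := by
          have := Finset.mem_filter.1 (Q'.min'_mem h); linarith [this.2]
        have h2 : (a + Q'.min' h) / 2 ∈ Q' := Finset.mem_filter.2 ⟨hv, h1⟩
        have := Q'.min'_le _ h2
        have := Finset.mem_filter.1 (Q'.min'_mem h)
        linarith [this.2]
      · rw [Finset.card_eq_zero, Finset.filter_eq_empty_iff]
        intro q hq
        have h1 := Q'.min'_le q hq
        have h2 := (Finset.mem_filter.1 (Q'.min'_mem h)).2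
        push_neg
        linarith
  | succ r ih =>
    intro hr
    obtain ⟨v, hav, hvQ, hcard⟩ := ih (by omega)
    set Q' := Q.filter (fun q => a < q) with hQ'
    set R := Q'.filter (fun q => ¬ q < v) with hR
    have hRcard : R.card = Q'.card - r := by
      have hsub : R = Q' \ Q'.filter (fun q => q < v) := Finset.filter_not _ _
      rw [hsub, Finset.card_sdiff_of_subset (Finset.filter_subset _ _), hcard]
    have hRne : R.Nonempty := Finset.card_pos.1 (by omega)
    set q₀ := R.min' hRne with hq₀
    have hq₀R : q₀ ∈ R := R.min'_mem hRne
    have hq₀Q' : q₀ ∈ Q' := (Finset.mem_filter.1 hq₀R).1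
    have hq₀v : v ≤ q₀ := not_lt.1 (Finset.mem_filter.1 hq₀R).2
    have hq₀v' : v < q₀ := lt_of_le_of_ne hq₀v (by
      intro h; exact hvQ (by rw [h]; exact (Finset.mem_filter.1 hq₀Q').1))
    -- next point above q₀
    set R' := Q'.filter (fun q => q₀ < q) with hR'
    have hnext : ∃ w, q₀ < w ∧ (∀ q ∈ R', w < q) ∧ w ∉ Q := by
      rcases R'.eq_empty_or_nonempty with h | h
      · refine ⟨q₀ + 1, by linarith, by simp [h], ?_⟩
        intro hw
        have : q₀ + 1 ∈ R' := Finset.mem_filter.2 ⟨Finset.mem_filter.2 ⟨hw, by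
          have := (Finset.mem_filter.1 hq₀Q').2; linarith⟩, by linarith⟩
        simp [h] at this
      · refine ⟨(q₀ + R'.min' h) / 2, ?_, ?_, ?_⟩
        · have := (Finset.mem_filter.1 (R'.min'_mem h)).2; linarith
        · intro q hq
          have h1 := R'.min'_le q hq
          have h2 := (Finset.mem_filter.1 (R'.min'_mem h)).2
          linarith
        · intro hw
          have hgt : a < (q₀ + R'.min' h) / 2 := by
            have := (Finset.mem_filter.1 hq₀Q').2
            have := (Finset.mem_filter.1 (R'.min'_mem h)).2
            linarith
          have : (q₀ + R'.min' h) / 2 ∈ R' := Finset.mem_filter.2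
            ⟨Finset.mem_filter.2 ⟨hw, hgt⟩, by
              have := (Finset.mem_filter.1 (R'.min'_mem h)).2; linarith⟩
          have h1 := R'.min'_le _ this
          have h2 := (Finset.mem_filter.1 (R'.min'_mem h)).2
          linarith
    obtain ⟨w, hq₀w, hwR', hwQ⟩ := hnext
    have hset : Q'.filter (fun q => q < w) = insert q₀ (Q'.filter (fun q => q < v)) := by
      ext q
      simp only [Finset.mem_filter, Finset.mem_insert]
      constructor
      · rintro ⟨hqQ', hqw⟩
        by_cases hqv : q < v
        · exact Or.inr ⟨hqQ', hqv⟩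
        · left
          by_contra hne
          have hqR : q ∈ R := Finset.mem_filter.2 ⟨hqQ', hqv⟩
          have h1 : q₀ ≤ q := R.min'_le q hqR
          have h2 : q₀ < q := lt_of_le_of_ne h1 (Ne.symm hne)
          have : q ∈ R' := Finset.mem_filter.2 ⟨hqQ', h2⟩
          exact absurd hqw (not_lt.2 (le_of_lt (hwR' q this)))
      · rintro (rfl | ⟨hqQ', hqv⟩)
        · exact ⟨hq₀Q', hq₀w⟩
        · exact ⟨hqQ', by linarith⟩
    refine ⟨w, ?_, hwQ, ?_⟩
    · have := (Finset.mem_filter.1 hq₀Q').2; linarith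
    · rw [hset, Finset.card_insert_of_notMem (by
        simp only [Finset.mem_filter]; rintro ⟨-, h⟩; linarith), hcard]


noncomputable def cnt (m : ℕ) (w v : ℝ) : ℕ :=
  ((Finset.Icc 1 m).filter (fun t : ℕ => w + (t : ℝ) < v)).card

lemma cnt_eq_min (m : ℕ) (w v : ℝ) (h0 : 0 < v - w)
    (hni : ∀ t : ℤ, -(m : ℤ) < t → t ≤ m → v - w ≠ (t : ℝ)) :
    (cnt m w v : ℤ) = min ⌊v - w⌋ (m : ℤ) := by
  have hfl : (0 : ℤ) ≤ ⌊v - w⌋ := Int.floor_nonneg.2 (le_of_lt h0)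
  have hfilter : (Finset.Icc 1 m).filter (fun t : ℕ => w + (t : ℝ) < v)
      = Finset.Icc 1 (min ⌊v - w⌋ (m : ℤ)).toNat := by
    ext t
    simp only [Finset.mem_filter, Finset.mem_Icc]
    constructor
    · rintro ⟨⟨h1, h2⟩, h3⟩
      refine ⟨h1, ?_⟩
      have ht : (t : ℝ) < v - w := by linarith
      have : (t : ℤ) ≤ ⌊v - w⌋ := Int.le_floor.2 (by exact_mod_cast le_of_lt ht)
      omega
    · rintro ⟨h1, h2⟩
      have h2' : (t : ℤ) ≤ min ⌊v - w⌋ (m : ℤ) := by omega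
      have htm : t ≤ m := by omega
      refine ⟨⟨h1, htm⟩, ?_⟩
      have : ((t : ℤ) : ℝ) ≤ v - w := by
        calc ((t : ℤ) : ℝ) ≤ (⌊v - w⌋ : ℝ) := by exact_mod_cast le_trans h2' (min_le_left _ _)
        _ ≤ v - w := Int.floor_le _
      have hne : v - w ≠ ((t : ℤ) : ℝ) := hni t (by omega) (by exact_mod_cast htm)
      have : ((t : ℤ) : ℝ) < v - w := lt_of_le_of_ne this (fun h => hne h.symm)
      push_cast at this
      linarith
  rw [cnt, hfilter, Nat.card_Icc]
  omega


noncomputable def colSum (m : ℕ) (f : ℕ → ℝ) (C : ℕ) : ℕ :=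
  ∑ i ∈ Finset.range (C + 1), cnt m (f i) (f (C + 1))

def Inv (n m : ℕ) (mu : ℕ → ℕ) (C : ℕ) (f : ℕ → ℝ) : Prop :=
  (∀ i j, i < j → j ≤ C → f i < f j) ∧
  (∀ i j, i < j → j ≤ C → ∀ t : ℤ, -(m : ℤ) < t → t ≤ m → f j - f i ≠ (t : ℝ)) ∧
  (∀ C', C' < C → C' + 2 ≤ n → colSum m f C' = mu (n - 2 - C'))

lemma colSum_congr (m : ℕ) (f g : ℕ → ℝ) (C : ℕ) (h : ∀ i, i ≤ C + 1 → g i = f i) :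
    colSum m g C = colSum m f C := by
  unfold colSum
  refine Finset.sum_congr rfl fun i hi => ?_
  rw [h i (by simp at hi; omega), h (C + 1) le_rfl]

section step
variable {n m : ℕ} {mu : ℕ → ℕ}

lemma step (hn : 2 ≤ n) (hanti : ∀ i j, i ≤ j → j < n → mu j ≤ mu i)
    (hbd : ∀ i < n, mu i ≤ (n - 1 - i) * m)
    (C : ℕ) (f : ℕ → ℝ) (hf : Inv n m mu C f) :
    ∃ g : ℕ → ℝ, (∀ i, i ≤ C → g i = f i) ∧ Inv n m mu (C + 1) g := by
  obtain ⟨hmono, hni, hcol⟩ := hf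
  have hle : ∀ i, i ≤ C → f i ≤ f C := by
    intro i hi
    rcases eq_or_lt_of_le hi with rfl | h
    · exact le_rfl
    · exact le_of_lt (hmono i C h le_rfl)
  set P := (Finset.range (C + 1)) ×ˢ (Finset.Icc 1 m) with hP
  set Q := P.image (fun p : ℕ × ℕ => f p.1 + (p.2 : ℝ)) with hQ
  -- injectivity
  have hinj : Set.InjOn (fun p : ℕ × ℕ => f p.1 + (p.2 : ℝ)) ↑P := by
    rintro ⟨i, t⟩ hi ⟨j, t'⟩ hj hEq
    have hi' := Finset.mem_product.1 (Finset.mem_coe.1 hi)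
    have hj' := Finset.mem_product.1 (Finset.mem_coe.1 hj)
    simp only [Finset.mem_range, Finset.mem_Icc] at hi' hj'
    have hi1 := hi'.1
    have hi2 := hi'.2.1
    have hi3 := hi'.2.2
    have hj1 := hj'.1
    have hj2 := hj'.2.1
    have hj3 := hj'.2.2
    have hEq' : f i + (t : ℝ) = f j + (t' : ℝ) := hEq
    rcases lt_trichotomy i j with h | rfl | h
    · exfalso
      refine hni i j h (by omega) ((t : ℤ) - (t' : ℤ)) (by omega) (by omega) ?_
      push_cast
      linarith [hEq']
    · have : (t : ℝ) = (t' : ℝ) := by linarith [hEq']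
      have : t = t' := by exact_mod_cast this
      simp [this]
    · exfalso
      refine hni j i h (by omega) ((t' : ℤ) - (t : ℤ)) (by omega) (by omega) ?_
      push_cast
      linarith [hEq']
  have card_filter_product : ∀ pr : ℕ × ℕ → Prop,
      ((P.filter pr).card = ∑ a ∈ Finset.range (C+1), ((Finset.Icc 1 m).filter (fun b => pr (a, b))).card) := by
    intro pr
    rw [hP, Finset.card_eq_sum_card_fiberwise (f := Prod.fst) (t := Finset.range (C+1))
      (fun q hq => (Finset.mem_product.1 (Finset.mem_filter.1 hq).1).1)]
    refine Finset.sum_congr rfl fun a ha => ?_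
    refine Finset.card_bij' (fun q _ => q.2) (fun b _ => (a, b)) ?_ ?_ ?_ ?_
    · intro q hq
      simp only [Finset.mem_filter, Finset.mem_product] at hq ⊢
      obtain ⟨⟨⟨-, h2⟩, h3⟩, h4⟩ := hq
      exact ⟨h2, by rwa [← h4]⟩
    · intro b hb
      simp only [Finset.mem_filter, Finset.mem_product] at hb ⊢
      exact ⟨⟨⟨ha, hb.1⟩, hb.2⟩, trivial⟩
    · intro q hq
      simp only [Finset.mem_filter] at hq
      exact Prod.ext hq.2.symm rfl
    · intro b _; rfl
  have hcount : ∀ v : ℝ, (Q.filter (fun q => q < v)).card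
      = ∑ i ∈ Finset.range (C + 1), cnt m (f i) v := by
    intro v
    rw [hQ, Finset.filter_image, Finset.card_image_of_injOn
      (hinj.mono (by exact_mod_cast Finset.filter_subset _ _))]
    exact card_filter_product _
  have hQcard : Q.card = (C + 1) * m := by
    rw [hQ, Finset.card_image_of_injOn hinj, hP, Finset.card_product, Finset.card_range,
      Nat.card_Icc, Nat.add_sub_cancel]
  set a := f C with ha
  have haQ : a ∉ Q := by
    rw [hQ]
    intro hmem
    obtain ⟨⟨i, t⟩, hiP, hEq⟩ := Finset.mem_image.1 hmem
    rw [hP] at hiP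
    simp only [Finset.mem_product, Finset.mem_range, Finset.mem_Icc] at hiP
    rcases eq_or_lt_of_le (Nat.lt_succ_iff.1 hiP.1) with rfl | hiC
    · have : (t : ℝ) = 0 := by linarith
      have : t = 0 := by exact_mod_cast this
      omega
    · refine hni i C hiC le_rfl (t : ℤ) (by omega) (by exact_mod_cast hiP.2.2) ?_
      push_cast
      linarith
  -- cnt at a for i = C is zero
  have hcntC : cnt m (f C) a = 0 := by
    rw [ha, cnt, Finset.card_eq_zero, Finset.filter_eq_empty_iff]
    intro t ht
    simp only [Finset.mem_Icc] at ht
    push_neg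
    have : (0 : ℝ) ≤ (t : ℝ) := by positivity
    linarith
  have hTmin : (Q.filter (fun q => q < a)).card
      = ∑ i ∈ Finset.range C, cnt m (f i) a := by
    rw [hcount a]
    rw [Finset.sum_range_succ, hcntC]
    omega
  -- partition of Q.card
  have hsplit : Q.card = (Q.filter (fun q => q < a)).card + (Q.filter (fun q => a < q)).card := by
    have h1 : Q.filter (fun q => ¬ q < a) = Q.filter (fun q => a < q) := by
      refine Finset.filter_congr fun q hq => ?_
      have : q ≠ a := fun h => haQ (h ▸ hq)
      constructor
      · intro h; rcases lt_trichotomy q a with h' | h' | h' <;> first | exact absurd h' h | exact absurd h' this | exact h'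
      · intro h; exact not_lt.2 (le_of_lt h)
    rw [← h1]
    have hsub : Q.filter (fun q => ¬ q < a) = Q \ Q.filter (fun q => q < a) :=
      Finset.filter_not _ _
    rw [hsub, Finset.card_sdiff_of_subset (Finset.filter_subset _ _)]
    have := Finset.card_filter_le Q (fun q => q < a)
    omega
  -- target bounds
  set Tmin := (Q.filter (fun q => q < a)).card with hTm
  have hbound : C + 2 ≤ n → Tmin ≤ mu (n - 2 - C) ∧ mu (n - 2 - C) ≤ Q.card := by
    intro hCn
    constructor
    · rcases Nat.eq_zero_or_pos C with rfl | hC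
      · have h0 : Tmin = 0 := by rw [hTmin]; simp
        omega
      · have hC1 : C - 1 + 1 = C := by omega
        have h1 : Tmin = colSum m f (C - 1) := by
          rw [hTmin]
          unfold colSum
          rw [hC1]
        have h2 : colSum m f (C - 1) = mu (n - 2 - (C - 1)) :=
          hcol (C - 1) (by omega) (by omega)
        have h3 : n - 2 - (C - 1) = n - 1 - C := by omega
        have h4 : mu (n - 1 - C) ≤ mu (n - 2 - C) :=
          hanti (n - 2 - C) (n - 1 - C) (by omega) (by omega)
        rw [h1, h2, h3]
        exact h4
    · calc mu (n - 2 - C) ≤ (n - 1 - (n - 2 - C)) * m := hbd _ (by omega)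
        _ = (C + 1) * m := by congr 1; omega
        _ = Q.card := hQcard.symm
  set r : ℕ := if C + 2 ≤ n then mu (n - 2 - C) - Tmin else 0 with hr
  have hrle : r ≤ (Q.filter (fun q => a < q)).card := by
    rw [hr]
    split_ifs with hCn
    · have := hbound hCn
      omega
    · omega
  obtain ⟨v, hav, hvQ, hvcut⟩ := exists_cut Q a r hrle
  have hvcount : (Q.filter (fun q => q < v)).card = Tmin + r := by
    have hU : Q.filter (fun q => q < v)
        = Q.filter (fun q => q < a) ∪ (Q.filter (fun q => a < q)).filter (fun q => q < v) := by
      ext q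
      simp only [Finset.mem_filter, Finset.mem_union]
      constructor
      · rintro ⟨hq, hqv⟩
        have hne : q ≠ a := fun h => haQ (h ▸ hq)
        rcases lt_trichotomy q a with h | h | h
        · exact Or.inl ⟨hq, h⟩
        · exact absurd h hne
        · exact Or.inr ⟨⟨hq, h⟩, hqv⟩
      · rintro (⟨hq, h⟩ | ⟨⟨hq, -⟩, h⟩)
        · exact ⟨hq, by linarith⟩
        · exact ⟨hq, h⟩
    have hdisj : Disjoint (Q.filter (fun q => q < a))
        ((Q.filter (fun q => a < q)).filter (fun q => q < v)) := by
      rw [Finset.disjoint_left]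
      intro q h1 h2
      simp only [Finset.mem_filter] at h1 h2
      linarith [h1.2, h2.1.2]
    rw [hU, Finset.card_union_of_disjoint hdisj, hvcut]
  have hcolv : C + 2 ≤ n → ∑ i ∈ Finset.range (C + 1), cnt m (f i) v = mu (n - 2 - C) := by
    intro hCn
    have h1 := hbound hCn
    have h2 := hcount v
    rw [hvcount] at h2
    rw [← h2, hr, if_pos hCn]
    omega
  -- define g
  refine ⟨Function.update f (C + 1) v, fun i hi => Function.update_of_ne (by omega) _ _, ?_, ?_, ?_⟩
  · -- monotone
    intro i j hij hj
    have hgi : Function.update f (C + 1) v i = f i := Function.update_of_ne (by omega) _ _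
    rcases eq_or_lt_of_le hj with rfl | hj'
    · rw [hgi, Function.update_self]
      calc f i ≤ f C := hle i (by omega)
        _ < v := hav
    · have hgj : Function.update f (C + 1) v j = f j := Function.update_of_ne (by omega) _ _
      rw [hgi, hgj]
      exact hmono i j hij (by omega)
  · -- nonintegrality
    intro i j hij hj t ht1 ht2
    have hgi : Function.update f (C + 1) v i = f i := Function.update_of_ne (by omega) _ _
    rcases eq_or_lt_of_le hj with rfl | hj'
    · rw [hgi, Function.update_self]
      rcases le_or_gt t 0 with ht0 | ht0
      · intro hEq
        have h1 : f i ≤ f C := hle i (by omega)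
        have h2 : ((t : ℤ) : ℝ) ≤ 0 := by exact_mod_cast ht0
        have : (0 : ℝ) < v - f i := by linarith
        rw [hEq] at this
        linarith
      · intro hEq
        apply hvQ
        rw [hQ]
        refine Finset.mem_image.2 ⟨(i, t.toNat), ?_, ?_⟩
        · rw [hP]
          refine Finset.mem_product.2 ⟨Finset.mem_range.2 (by omega), Finset.mem_Icc.2 ⟨by omega, by omega⟩⟩
        · show f i + ((t.toNat : ℕ) : ℝ) = v
          have hcast : ((t.toNat : ℕ) : ℝ) = ((t : ℤ) : ℝ) := by
            exact_mod_cast congrArg (fun z : ℤ => (z : ℝ)) (Int.toNat_of_nonneg (by omega : (0 : ℤ) ≤ t))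
          rw [hcast]
          linarith [hEq]
    · have hgj : Function.update f (C + 1) v j = f j := Function.update_of_ne (by omega) _ _
      rw [hgi, hgj]
      exact hni i j hij (by omega) t ht1 ht2
  · -- column sums
    intro C' hC' hC'n
    rcases lt_or_eq_of_le (Nat.lt_succ_iff.1 hC') with h | rfl
    · rw [colSum_congr m f _ C' (fun i hi => Function.update_of_ne (by omega) _ _)]
      exact hcol C' h hC'n
    · have : colSum m (Function.update f (C' + 1) v) C' = ∑ i ∈ Finset.range (C' + 1), cnt m (f i) v := by
        rw [colSum]
        refine Finset.sum_congr rfl fun i hi => ?_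
        rw [Function.update_of_ne (by simp at hi; omega) _ _, Function.update_self]
      rw [this]
      exact hcolv hC'n

lemma exists_inv (hn : 2 ≤ n) (hanti : ∀ i j, i ≤ j → j < n → mu j ≤ mu i)
    (hbd : ∀ i < n, mu i ≤ (n - 1 - i) * m) (C : ℕ) : ∃ f, Inv n m mu C f := by
  induction C with
  | zero =>
    refine ⟨fun _ => 0, ?_, ?_, ?_⟩
    · intro i j hij hj
      exact absurd hj (by omega)
    · intro i j hij hj
      exact absurd hj (by omega)
    · intro C' hC'
      exact absurd hC' (by omega)
  | succ C ih =>
    obtain ⟨f, hf⟩ := ih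
    obtain ⟨g, -, hg⟩ := step hn hanti hbd C f hf
    exact ⟨g, hg⟩

end step

lemma floor_add_bounds (α β : ℝ) : ⌊α⌋ + ⌊β⌋ ≤ ⌊α + β⌋ ∧ ⌊α + β⌋ ≤ ⌊α⌋ + ⌊β⌋ + 1 := by
  constructor
  · exact Int.le_floor.2 (by push_cast; linarith [Int.floor_le α, Int.floor_le β])
  · have h := Int.floor_lt.2 (show α + β < ((⌊α⌋ + ⌊β⌋ + 2 : ℤ) : ℝ) by
      push_cast; linarith [Int.lt_floor_add_one α, Int.lt_floor_add_one β])
    omega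

lemma key (n m : ℕ) (x y : ℕ → ℝ) (e f : ℕ → ℕ → ℤ)
    (hx : RegionPoint n m x) (hy : RegionPoint n m y)
    (he : TabOf n m x e) (hf : TabOf n m y f)
    (C u w : ℕ) (huw : u < w) (hwC : w ≤ C) (hC : C + 2 ≤ n)
    (hprev : ∀ i j, i ≤ j → j < C → j + 2 ≤ n → e i j = f i j)
    (h1 : f u C < e u C) (h2 : e w C < f w C) : False := by
  obtain ⟨w', rfl⟩ : ∃ w', w = w' + 1 := ⟨w - 1, by omega⟩
  have hval1 : u ≤ w' := by omega
  have hval2 : w' + 2 ≤ n := by omega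
  have huC : u ≤ C := by omega
  have hwC2 : w' + 1 ≤ C := hwC
  obtain ⟨-, hxpos, -⟩ := hx
  obtain ⟨-, hypos, -⟩ := hy
  have hdecx : inn x u C = inn x u w' + inn x (w' + 1) C := by unfold inn; ring
  have hdecy : inn y u C = inn y u w' + inn y (w' + 1) C := by unfold inn; ring
  have hA := floor_add_bounds (inn x u w') (inn x (w' + 1) C)
  have hB := floor_add_bounds (inn y u w') (inn y (w' + 1) C)
  rw [← hdecx] at hA
  rw [← hdecy] at hB
  have he1 : e u w' = min ⌊inn x u w'⌋ (m : ℤ) := he u w' hval1 hval2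
  have he2 : e (w' + 1) C = min ⌊inn x (w' + 1) C⌋ (m : ℤ) := he (w' + 1) C hwC2 hC
  have he3 : e u C = min ⌊inn x u C⌋ (m : ℤ) := he u C (by omega) hC
  have hf1 : f u w' = min ⌊inn y u w'⌋ (m : ℤ) := hf u w' hval1 hval2
  have hf2 : f (w' + 1) C = min ⌊inn y (w' + 1) C⌋ (m : ℤ) := hf (w' + 1) C hwC2 hC
  have hf3 : f u C = min ⌊inn y u C⌋ (m : ℤ) := hf u C (by omega) hC
  have hg : e u w' = f u w' := hprev u w' hval1 (by omega) hval2
  have hn1 : (0 : ℤ) ≤ ⌊inn x u w'⌋ := Int.floor_nonneg.2 (le_of_lt (hxpos u w' hval1 hval2))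
  have hn2 : (0 : ℤ) ≤ ⌊inn x (w' + 1) C⌋ := Int.floor_nonneg.2 (le_of_lt (hxpos (w' + 1) C hwC2 hC))
  have hn3 : (0 : ℤ) ≤ ⌊inn y u w'⌋ := Int.floor_nonneg.2 (le_of_lt (hypos u w' hval1 hval2))
  have hn4 : (0 : ℤ) ≤ ⌊inn y (w' + 1) C⌋ := Int.floor_nonneg.2 (le_of_lt (hypos (w' + 1) C hwC2 hC))
  omega

lemma uniq (n m : ℕ) (x y : ℕ → ℝ) (e f : ℕ → ℕ → ℤ)
    (hx : RegionPoint n m x) (hy : RegionPoint n m y)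
    (he : TabOf n m x e) (hf : TabOf n m y f)
    (hcols : ∀ C, C + 2 ≤ n →
      (∑ i ∈ Finset.range (C + 1), e i C) = (∑ i ∈ Finset.range (C + 1), f i C)) :
    ∀ j i, i ≤ j → j + 2 ≤ n → e i j = f i j := by
  intro j
  induction j using Nat.strong_induction_on with
  | _ j IH =>
  intro i hij hjn
  by_contra hne
  have hsum := hcols j hjn
  have hprev : ∀ i' j', i' ≤ j' → j' < j → j' + 2 ≤ n → e i' j' = f i' j' :=
    fun i' j' h1 h2 h3 => IH j' h2 i' h1 h3
  have hprev' : ∀ i' j', i' ≤ j' → j' < j → j' + 2 ≤ n → f i' j' = e i' j' :=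
    fun i' j' h1 h2 h3 => (hprev i' j' h1 h2 h3).symm
  rcases Ne.lt_or_gt hne with hlt | hlt
  · -- e i j < f i j; find k with f k j < e k j
    have hk : ∃ k ∈ Finset.range (j + 1), f k j < e k j := by
      by_contra hall
      push_neg at hall
      have hstrict : ∑ i' ∈ Finset.range (j + 1), e i' j < ∑ i' ∈ Finset.range (j + 1), f i' j :=
        Finset.sum_lt_sum (fun k hk' => le_of_not_gt fun h => absurd h (not_lt.2 (hall k hk')))
          ⟨i, Finset.mem_range.2 (by omega), hlt⟩
      omega
    obtain ⟨k, hkmem, hkf⟩ := hk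
    have hkj : k ≤ j := by
      have := Finset.mem_range.1 hkmem; omega
    have hik : i ≠ k := by
      intro h; rw [h] at hlt; omega
    rcases Nat.lt_or_ge i k with h | h
    · exact key n m y x f e hy hx hf he j i k h hkj hjn hprev' hlt hkf
    · exact key n m x y e f hx hy he hf j k i (by omega) hij hjn hprev hkf hlt
  · -- f i j < e i j
    have hk : ∃ k ∈ Finset.range (j + 1), e k j < f k j := by
      by_contra hall
      push_neg at hall
      have hstrict : ∑ i' ∈ Finset.range (j + 1), f i' j < ∑ i' ∈ Finset.range (j + 1), e i' j :=
        Finset.sum_lt_sum (fun k hk' => le_of_not_gt fun h => absurd h (not_lt.2 (hall k hk')))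
          ⟨i, Finset.mem_range.2 (by omega), hlt⟩
      omega
    obtain ⟨k, hkmem, hkf⟩ := hk
    have hkj : k ≤ j := by
      have := Finset.mem_range.1 hkmem; omega
    have hik : i ≠ k := by
      intro h; rw [h] at hlt; omega
    rcases Nat.lt_or_ge i k with h | h
    · exact key n m x y e f hx hy he hf j i k h hkj hjn hprev hlt hkf
    · exact key n m y x f e hy hx hf he j k i (by omega) hij hjn hprev' hkf hlt


/-- column sums give a bijection from dominant `m`-Shi regions (identified
with their normalized Shi tableaux) to partitions `μ` with `μ_n = 0` and
`μ_i ≤ (n-i)·m`: each such `μ` arises from exactly one region. -/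
theorem column_sums_bijection (n m : ℕ) (hn : 2 ≤ n) (hm : 1 ≤ m) (mu : ℕ → ℕ)
    (hanti : ∀ i j, i ≤ j → j < n → mu j ≤ mu i) (hlast : mu (n - 1) = 0)
    (hbd : ∀ i < n, mu i ≤ (n - 1 - i) * m) :
    ∃! e : ℕ → ℕ → ℤ, Normalized n e ∧ IsShiTab n m e ∧
      ∀ C, C + 2 ≤ n →
        (∑ i ∈ Finset.range (C + 1), e i C) = (mu (n - 2 - C) : ℤ) := by
  obtain ⟨f0, hmono, hnint, hcol⟩ := exists_inv hn hanti hbd (n - 1)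
  set S := ∑ j ∈ Finset.range n, f0 j with hS
  set x : ℕ → ℝ := fun i => S / n - f0 i with hxd
  have hinn : ∀ i j, inn x i j = f0 (j + 1) - f0 i := by
    intro i j
    simp only [hxd, inn]
    ring
  have hx : RegionPoint n m x := by
    refine ⟨?_, ?_, ?_⟩
    · unfold SumZero
      simp only [hxd]
      rw [Finset.sum_sub_distrib, Finset.sum_const, Finset.card_range, nsmul_eq_mul]
      have hn0 : (n : ℝ) ≠ 0 := Nat.cast_ne_zero.2 (by omega)
      have : (n : ℝ) * (S / n) = S := by field_simp
      rw [this, ← hS, sub_self]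
    · intro i j hij hjn
      rw [hinn]
      have := hmono i (j + 1) (by omega) (by omega)
      linarith
    · intro i j hij hjn t ht1 ht2
      rw [hinn]
      exact hnint i (j + 1) (by omega) (by omega) t ht1 ht2
  set e₀ : ℕ → ℕ → ℤ := fun i j => if i ≤ j ∧ j + 2 ≤ n then min ⌊f0 (j + 1) - f0 i⌋ (m : ℤ) else 0
    with he₀d
  have htab : TabOf n m x e₀ := by
    intro i j hij hjn
    simp only [he₀d, hinn]
    rw [if_pos ⟨hij, hjn⟩]
  have hnorm : Normalized n e₀ := by
    intro i j h
    simp only [he₀d]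
    rw [if_neg h]
  have hsum : ∀ C, C + 2 ≤ n →
      (∑ i ∈ Finset.range (C + 1), e₀ i C) = (mu (n - 2 - C) : ℤ) := by
    intro C hC
    have h1 : ∀ i ∈ Finset.range (C + 1), e₀ i C = (cnt m (f0 i) (f0 (C + 1)) : ℤ) := by
      intro i hi
      have hiC : i ≤ C := by
        have := Finset.mem_range.1 hi; omega
      simp only [he₀d]
      rw [if_pos ⟨hiC, hC⟩]
      rw [cnt_eq_min m (f0 i) (f0 (C + 1)) ?_ ?_]
      · have := hmono i (C + 1) (by omega) (by omega)
        linarith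
      · intro t ht1 ht2
        exact fun h => hnint i (C + 1) (by omega) (by omega) t ht1 ht2 h
    rw [Finset.sum_congr rfl h1]
    have h2 : colSum m f0 C = mu (n - 2 - C) := hcol C (by omega) hC
    unfold colSum at h2
    rw [← Nat.cast_sum, h2]
  have hist : IsShiTab n m e₀ := ⟨x, hx, htab⟩
  refine ⟨e₀, ⟨hnorm, hist, hsum⟩, ?_⟩
  rintro e ⟨hen, ⟨y, hy, hey⟩, hesum⟩
  funext i j
  by_cases hij : i ≤ j ∧ j + 2 ≤ n
  · exact uniq n m y x e e₀ hy hx hey htab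
      (fun C hC => by rw [hesum C hC, hsum C hC]) j i hij.1 hij.2
  · rw [hen i j hij, hnorm i j hij]

end Shi
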